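/- For all real a with 2 ≤ a ≤ 3 and all real x ≥ t > 0, one has (x - t/a)^a ≤ x^a - t·x^(a-1) + (t²/a)·x^(a-2). -/

import Mathlib

theorem stmt_6 (a x t : ℝ) (ha2 : 2 ≤ a) (ha3 : a ≤ 3) (ht : 0 < t) (hxt : t ≤ x) :
    (x - t / a) ^ a ≤ x ^ a - t * x ^ (a - 1) + t ^ 2 / a * x ^ (a - 2) := by
  have hx : 0 < x := ht.trans_le hxt
  have ha : 0 < a := by linarith
  set s : ℝ := t / (a * x) with hs_def
  have hs0 : 0 < s := div_pos ht (by positivity)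
  have hs1 : s ≤ 1 / 2 := by
    rw [hs_def, div_le_div_iff₀ (by positivity) (by norm_num)]
    nlinarith
  have h1s : (0:ℝ) < 1 - s := by linarith
  -- Bernoulli: (1-s)^(a-2) ≤ 1 - (a-2)*s
  have hber : (1 - s) ^ (a - 2) ≤ 1 + (a - 2) * (-s) := by
    have := rpow_one_add_le_one_add_mul_self (s := -s) (by linarith) (p := a - 2)
      (by linarith) (by linarith)
    have e : (1:ℝ) + -s = 1 - s := by ring
    rw [e] at this; exact this
  -- split the exponent
  have hsplit : (1 - s) ^ a = (1 - s) ^ (2:ℝ) * (1 - s) ^ (a - 2) := by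
    rw [← Real.rpow_add h1s]; ring_nf
  have hsq : (1 - s) ^ (2:ℝ) = (1 - s) ^ (2:ℕ) := by
    rw [← Real.rpow_natCast]; norm_num
  have hkey : (1 - s) ^ a ≤ 1 - a * s + a * s ^ 2 := by
    calc (1 - s) ^ a = (1 - s) ^ (2:ℕ) * (1 - s) ^ (a - 2) := by rw [hsplit, hsq]
      _ ≤ (1 - s) ^ (2:ℕ) * (1 + (a - 2) * (-s)) := by
          apply mul_le_mul_of_nonneg_left hber (by positivity)
      _ ≤ 1 - a * s + a * s ^ 2 := by
          nlinarith [mul_nonneg (by linarith : (0:ℝ) ≤ a - 2) (by positivity : (0:ℝ) ≤ s ^ 3),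
            mul_nonneg (by linarith : (0:ℝ) ≤ 3 - a) (sq_nonneg s)]
  -- rewrite everything via x^a
  have hxa : (0:ℝ) < x ^ a := Real.rpow_pos_of_pos hx a
  have hx1 : x ^ (a - 1) = x ^ a / x := by
    rw [Real.rpow_sub hx, Real.rpow_one]
  have hx2 : x ^ (a - 2) = x ^ a / x ^ (2:ℕ) := by
    rw [Real.rpow_sub hx, ← Real.rpow_natCast x 2]; norm_num
  have hbase : x - t / a = x * (1 - s) := by
    rw [hs_def]; field_simp
  have hlhs : (x - t / a) ^ a = x ^ a * (1 - s) ^ a := by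
    rw [hbase, Real.mul_rpow hx.le h1s.le]
  rw [hlhs, hx1, hx2]
  have hmul : x ^ a * (1 - s) ^ a ≤ x ^ a * (1 - a * s + a * s ^ 2) :=
    mul_le_mul_of_nonneg_left hkey hxa.le
  have hrw : x ^ a * (1 - a * s + a * s ^ 2)
      = x ^ a - t * (x ^ a / x) + t ^ 2 / a * (x ^ a / x ^ (2:ℕ)) := by
    rw [hs_def]; field_simp
  linarith [hrw ▸ hmul]
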